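/- Let u and v be reduced words with respect to G. Then T(u) and T(v) are reduced words with respect to G′, and the following are equivalent: (a) u = v in G; (b) T(u) = T(v) in G′ and π_t(u) = π_t(v). -/

import Mathlib

/-!
Multiple HNN-extension `G = ⟨H, t₁, …, tₙ | tᵢ⁻¹ a tᵢ = φᵢ(a) (a ∈ Aᵢ)⟩`, presented
as a `PresentedGroup` on the alphabet `H ⊕ ι`.
-/

/-- Relators of the multiple HNN-extension presentation. -/
def hnnRels {H : Type*} [Group H] {ι : Type*} (A B : ι → Subgroup H)
    (φ : ∀ i, A i ≃* B i) : Set (FreeGroup (H ⊕ ι)) :=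
  {r | ∃ h₁ h₂ : H, r = FreeGroup.of (Sum.inl h₁) * FreeGroup.of (Sum.inl h₂) *
        (FreeGroup.of (Sum.inl (h₁ * h₂)))⁻¹} ∪
  {r | ∃ (i : ι) (a : A i), r = (FreeGroup.of (Sum.inr i))⁻¹ *
        FreeGroup.of (Sum.inl (a : H)) * FreeGroup.of (Sum.inr i) *
        (FreeGroup.of (Sum.inl ((φ i a : B i) : H)))⁻¹}

/-- The multiple HNN-extension of `H`. -/
abbrev MHNN {H : Type*} [Group H] {ι : Type*} (A B : ι → Subgroup H)
    (φ : ∀ i, A i ≃* B i) :=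
  PresentedGroup (hnnRels A B φ)

/-- Canonical generators: `Sum.inl h` for `h ∈ H`, `Sum.inr i` for the stable letter `tᵢ`. -/
def gen {H : Type*} [Group H] {ι : Type*} (A B : ι → Subgroup H)
    (φ : ∀ i, A i ≃* B i) (x : H ⊕ ι) : MHNN A B φ :=
  PresentedGroup.of x

/-- The element represented by the word `u₀ t_{idx 0}^{e 0} u₁ ⋯ t_{idx (ℓ-1)}^{e (ℓ-1)} u_ℓ`. -/
def wordProd {H : Type*} [Group H] {ι : Type*} (A B : ι → Subgroup H)
    (φ : ∀ i, A i ≃* B i) (ℓ : ℕ) (u : ℕ → H) (idx : ℕ → ι) (e : ℕ → ℤ) :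
    MHNN A B φ :=
  gen A B φ (Sum.inl (u 0)) *
    ((List.range ℓ).map fun k =>
      gen A B φ (Sum.inr (idx k)) ^ e k * gen A B φ (Sum.inl (u (k + 1)))).prod

/-- `side A B i e` is `A i (e)`, i.e. `A i` if `e = 1` and `B i` if `e = -1`. -/
def side {H : Type*} [Group H] {ι : Type*} (A B : ι → Subgroup H) (i : ι) (e : ℤ) :
    Subgroup H :=
  if e = 1 then A i else B i

/-- The word is reduced: exponents are `±1`, no factor `tᵢ^{-α} w tᵢ^{α}` with `w ∈ A i (α)`. -/
def ReducedWord {H : Type*} [Group H] {ι : Type*} (A B : ι → Subgroup H)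
    (ℓ : ℕ) (u : ℕ → H) (idx : ℕ → ι) (e : ℕ → ℤ) : Prop :=
  (∀ k < ℓ, e k = 1 ∨ e k = -1) ∧
  ∀ k, k + 1 < ℓ → idx k = idx (k + 1) → e k = -e (k + 1) →
    u (k + 1) ∉ side A B (idx k) (e (k + 1))


/-- The partial isomorphisms `φ i : A i ≃* B i` and `φ k : A k ≃* B k` are equal
as partial isomorphisms from `A` to `B`. -/
def SamePartialIso {H : Type*} [Group H] {ι : Type*} (A B : ι → Subgroup H)
    (φ : ∀ i, A i ≃* B i) (i k : ι) : Prop :=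
  A i = A k ∧ B i = B k ∧
    ∀ (a : H) (hi : a ∈ A i) (hk : a ∈ A k),
      ((φ i ⟨a, hi⟩ : B i) : H) = ((φ k ⟨a, hk⟩ : B k) : H)


open Subgroup Function

namespace MHNN

variable {H : Type*} [Group H] {ι : Type*} (A B : ι → Subgroup H) (φ : ∀ i, A i ≃* B i)

theorem mk_rel_one {r : FreeGroup (H ⊕ ι)} (h : r ∈ hnnRels A B φ) :
    PresentedGroup.mk (hnnRels A B φ) r = 1 :=
  (QuotientGroup.eq_one_iff _).2 (Subgroup.subset_normalClosure h)

/-- The canonical embedding of `H`. -/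
def ofH : H →* MHNN A B φ :=
  MonoidHom.mk' (fun h => PresentedGroup.of (Sum.inl h)) <| by
    intro h₁ h₂
    have := mk_rel_one A B φ (Or.inl ⟨h₁, h₂, rfl⟩)
    simp only [map_mul, map_inv] at this
    have := mul_inv_eq_one.1 this
    exact this.symm

/-- The stable letters. -/
def tt (i : ι) : MHNN A B φ := PresentedGroup.of (Sum.inr i)

theorem ofH_eq (h : H) : ofH A B φ h = gen A B φ (Sum.inl h) := rfl
theorem tt_eq (i : ι) : tt A B φ i = gen A B φ (Sum.inr i) := rfl

variable {A B φ}

theorem ofH_mul_tt (i : ι) (a : A i) :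
    ofH A B φ (a : H) * tt A B φ i = tt A B φ i * ofH A B φ ((φ i a : B i) : H) := by
  have := mk_rel_one A B φ (Or.inr ⟨i, a, rfl⟩)
  simp only [map_mul, map_inv] at this
  have h := mul_inv_eq_one.1 this
  -- h : t⁻¹ * a * t = φ a
  have h' : (tt A B φ i)⁻¹ * ofH A B φ (a : H) * tt A B φ i = ofH A B φ ((φ i a : B i) : H) := h
  calc ofH A B φ (a : H) * tt A B φ i
      = tt A B φ i * ((tt A B φ i)⁻¹ * ofH A B φ (a : H) * tt A B φ i) := by group
    _ = _ := by rw [h']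

theorem tt_mul_ofH (i : ι) (b : B i) :
    tt A B φ i * ofH A B φ (b : H) = ofH A B φ (((φ i).symm b : A i) : H) * tt A B φ i := by
  have := ofH_mul_tt (A := A) (B := B) (φ := φ) i ((φ i).symm b)
  rw [MulEquiv.apply_symm_apply] at this
  exact this.symm

theorem inv_tt_mul_ofH (i : ι) (a : A i) :
    (tt A B φ i)⁻¹ * ofH A B φ (a : H) = ofH A B φ ((φ i a : B i) : H) * (tt A B φ i)⁻¹ := by
  have h := ofH_mul_tt (A := A) (B := B) (φ := φ) i a
  calc (tt A B φ i)⁻¹ * ofH A B φ (a : H)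
      = (tt A B φ i)⁻¹ * (ofH A B φ (a : H) * tt A B φ i) * (tt A B φ i)⁻¹ := by group
    _ = (tt A B φ i)⁻¹ * (tt A B φ i * ofH A B φ ((φ i a : B i) : H)) * (tt A B φ i)⁻¹ := by
        rw [h]
    _ = _ := by group

theorem ofH_mul_inv_tt (i : ι) (b : B i) :
    ofH A B φ (b : H) * (tt A B φ i)⁻¹ =
      (tt A B φ i)⁻¹ * ofH A B φ (((φ i).symm b : A i) : H) := by
  have h := tt_mul_ofH (A := A) (B := B) (φ := φ) i b
  calc ofH A B φ (b : H) * (tt A B φ i)⁻¹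
      = (tt A B φ i)⁻¹ * (tt A B φ i * ofH A B φ (b : H)) * (tt A B φ i)⁻¹ := by group
    _ = (tt A B φ i)⁻¹ * (ofH A B φ (((φ i).symm b : A i) : H) * tt A B φ i) * (tt A B φ i)⁻¹ := by
        rw [h]
    _ = _ := by group

end MHNN
namespace MHNN

variable {H : Type*} [Group H] {ι : Type*} (A B : ι → Subgroup H) (φ : ∀ i, A i ≃* B i)

/-- negation of a letter -/
abbrev np (p : ι × ℤˣ) : ι × ℤˣ := (p.1, -p.2)

@[simp] theorem np_np (p : ι × ℤˣ) : np (np p) = p := by simp [np]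
@[simp] theorem np_fst (p : ι × ℤˣ) : (np p).1 = p.1 := rfl
@[simp] theorem np_snd (p : ι × ℤˣ) : (np p).2 = -p.2 := rfl

/-- The subgroup `S p` such that `t_{p.1}^{p.2} * s = ψ_p(s) * t_{p.1}^{p.2}` for `s ∈ S p`. -/
def toSub (p : ι × ℤˣ) : Subgroup H := if p.2 = 1 then B p.1 else A p.1

@[simp] theorem toSub_one (i : ι) : toSub A B (i, 1) = B i := rfl
@[simp] theorem toSub_neg_one (i : ι) : toSub A B (i, -1) = A i := rfl

theorem toSub_np (p : ι × ℤˣ) : toSub A B (np p) = if p.2 = 1 then A p.1 else B p.1 := by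
  obtain ⟨i, u⟩ := p
  rcases Int.units_eq_one_or u with rfl | rfl <;> simp [np]

variable {A B}

/-- The isomorphism attached to a letter: `(φ i).symm` for `(i, 1)`, and `φ i` for `(i, -1)`. -/
def toSubEquiv (p : ι × ℤˣ) : toSub A B p ≃* toSub A B (np p) :=
  if hu : p.2 = 1 then
    (MulEquiv.subgroupCongr (by simp [toSub, hu])).trans
      ((φ p.1).symm.trans (MulEquiv.subgroupCongr (by simp [toSub_np, hu])))
  else
    (MulEquiv.subgroupCongr (by simp [toSub, hu])).trans
      ((φ p.1).trans (MulEquiv.subgroupCongr (by simp [toSub_np, hu])))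

theorem toSubEquiv_one_coe (i : ι) (b : toSub A B (i, 1)) :
    (toSubEquiv φ (i, 1) b : H) = ((φ i).symm ⟨b, b.2⟩ : H) := by
  simp [toSubEquiv, MulEquiv.subgroupCongr]
  rfl

theorem toSubEquiv_neg_one_coe (i : ι) (a : toSub A B (i, -1)) :
    (toSubEquiv φ (i, -1) a : H) = (φ i ⟨a, a.2⟩ : H) := by
  have h : ((-1 : ℤˣ) = 1) = False := by simp
  simp [toSubEquiv, MulEquiv.subgroupCongr]
  rfl

@[simp]
theorem toSubEquiv_neg_apply (p : ι × ℤˣ) (s : toSub A B p) :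
    (toSubEquiv φ (np p) (toSubEquiv φ p s) : H) = s := by
  obtain ⟨i, u⟩ := p
  rcases Int.units_eq_one_or u with rfl | rfl
  · have h1 : toSubEquiv φ (np ((i : ι), (1 : ℤˣ))) = toSubEquiv φ ((i : ι), (-1 : ℤˣ)) := rfl
    rw [h1, toSubEquiv_neg_one_coe]
    simp only [toSubEquiv_one_coe]
    simp
  · have h2 : ∀ x : toSub A B (np ((i : ι), (-1 : ℤˣ))),
        (toSubEquiv φ (np ((i : ι), (-1 : ℤˣ))) x : H) = ((φ i).symm ⟨x, x.2⟩ : H) :=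
      fun x => toSubEquiv_one_coe φ i x
    rw [h2]
    simp only [toSubEquiv_neg_one_coe]
    simp

variable (A B)

/-- `t_{p.1}^{p.2}` -/
def tp (p : ι × ℤˣ) : MHNN A B φ := tt A B φ p.1 ^ (p.2 : ℤ)

@[simp] theorem tp_np (p : ι × ℤˣ) : tp A B φ (np p) = (tp A B φ p)⁻¹ := by
  obtain ⟨i, u⟩ := p
  rcases Int.units_eq_one_or u with rfl | rfl <;> simp [tp, np]

variable {A B}

theorem tp_mul_ofH (p : ι × ℤˣ) (s : toSub A B p) :
    tp A B φ p * ofH A B φ (s : H) = ofH A B φ (toSubEquiv φ p s : H) * tp A B φ p := by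
  obtain ⟨i, u⟩ := p
  rcases Int.units_eq_one_or u with rfl | rfl
  · rw [toSubEquiv_one_coe]
    simpa [tp] using tt_mul_ofH (A := A) (B := B) (φ := φ) i ⟨s, s.2⟩
  · rw [toSubEquiv_neg_one_coe]
    simpa [tp] using inv_tt_mul_ofH (A := A) (B := B) (φ := φ) i ⟨s, s.2⟩

theorem equivM_eq_conj (p : ι × ℤˣ) (s : toSub A B p) :
    ofH A B φ (toSubEquiv φ p s : H) = tp A B φ p * ofH A B φ (s : H) * (tp A B φ p)⁻¹ := by
  have h := tp_mul_ofH (φ := φ) p s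
  calc ofH A B φ (toSubEquiv φ p s : H)
      = (tp A B φ p * ofH A B φ (s : H)) * (tp A B φ p)⁻¹ := by rw [h]; group
    _ = _ := by group

namespace NormalWord

variable (H A B)

/-- Choice of a right transversal for each letter. -/
structure TransversalPair : Type _ where
  set : ι × ℤˣ → Set H
  compl : ∀ p, IsComplement (toSub A B p : Subgroup H) (set p)

instance TransversalPair.nonempty : Nonempty (TransversalPair H A B) := by
  choose t ht using fun p ↦ (toSub A B p).exists_isComplement_right 1
  exact ⟨⟨t, fun p ↦ (ht p).1⟩⟩

/-- List-style word. -/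
structure RW : Type _ where
  head : H
  toList : List ((ι × ℤˣ) × H)
  chain : toList.Chain' (fun a b => a.2 ∈ toSub A B a.1 → b.1 ≠ np a.1)

/-- The empty reduced word. -/
@[simps]
def RW.empty : RW H A B :=
  { head := 1
    toList := []
    chain := List.isChain_nil }

variable {H A B}

/-- The product of a list-style word in `MHNN A B φ`. -/
def RW.prod (w : RW H A B) : MHNN A B φ :=
  ofH A B φ w.head * (w.toList.map (fun x => tp A B φ x.1 * ofH A B φ x.2)).prod

variable (A B)

structure _root_.MHNN.NWord (d : TransversalPair H A B) extends RW H A B : Type _ where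
  mem_set : ∀ (p : ι × ℤˣ) (g : H), (p, g) ∈ toList → g ∈ d.set p

variable {A B} {d : TransversalPair H A B}

@[ext]
theorem ext {w w' : NWord A B d}
    (h1 : w.head = w'.head) (h2 : w.toList = w'.toList) : w = w' := by
  rcases w with ⟨⟨⟩, _⟩; cases w'; simp_all

variable (d)

/-- The empty normal word. -/
@[simps]
def empty : NWord A B d :=
  { head := 1
    toList := []
    mem_set := by simp
    chain := List.isChain_nil }

/-- The word of an element of `H`. -/
@[simps]
def ofGroup (g : H) : NWord A B d :=
  { head := g
    toList := []
    mem_set := by simp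
    chain := List.isChain_nil }

variable {d}

instance : Inhabited (NWord A B d) := ⟨empty d⟩

instance : MulAction H (NWord A B d) where
  smul g w := { w with head := g * w.head }
  one_smul w := ext (one_mul _) rfl
  mul_smul g₁ g₂ w := ext (mul_assoc _ _ _) rfl


/-- Append a letter to a normal word, assuming no cancellation/normalization needed. -/
@[simps]
def cons (g : H) (p : ι × ℤˣ) (w : NWord A B d) (h1 : w.head ∈ d.set p)
    (h2 : ∀ p' ∈ Option.map Prod.fst w.toList.head?, w.head ∈ toSub A B p → p' ≠ np p) :
    NWord A B d :=
  { head := g,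
    toList := (p, w.head) :: w.toList,
    mem_set := by
      intro p' g' h'
      simp only [List.mem_cons, Prod.mk.injEq] at h'
      rcases h' with ⟨rfl, rfl⟩ | h'
      · exact h1
      · exact w.mem_set _ _ h'
    chain := by
      refine List.isChain_cons.2 ⟨?_, w.chain⟩
      rintro ⟨p', g'⟩ hp' hw1
      exact h2 _ (by simp_all) hw1 }

/-- A recursor to induct on a `NWord`. -/
@[elab_as_elim]
def consRecOn {motive : NWord A B d → Sort*} (w : NWord A B d)
    (ofGroup : ∀ g, motive (ofGroup d g))
    (cons : ∀ (g : H) (p : ι × ℤˣ) (w : NWord A B d) (h1 : w.head ∈ d.set p)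
      (h2 : ∀ p' ∈ Option.map Prod.fst w.toList.head?,
        w.head ∈ toSub A B p → p' ≠ np p),
      motive w → motive (cons g p w h1 h2)) : motive w := by
  rcases w with ⟨⟨g, l, chain⟩, mem_set⟩
  induction l generalizing g with
  | nil => exact ofGroup _
  | cons a l ih =>
    exact cons g a.1
      { head := a.2
        toList := l
        mem_set := fun _ _ h => mem_set _ _ (List.mem_cons_of_mem _ h),
        chain := (List.isChain_cons.1 chain).2 }
      (mem_set a.1 a.2 (List.mem_cons_self))
      (by simpa using (List.isChain_cons.1 chain).1)
      (ih _ _ _)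

@[simp]
theorem consRecOn_ofGroup {motive : NWord A B d → Sort*}
    (g : H) (ofGroup : ∀ g, motive (ofGroup d g))
    (cons : ∀ (g : H) (p : ι × ℤˣ) (w : NWord A B d) (h1 : w.head ∈ d.set p)
      (h2 : ∀ p' ∈ Option.map Prod.fst w.toList.head?,
        w.head ∈ toSub A B p → p' ≠ np p),
      motive w → motive (cons g p w h1 h2)) :
    consRecOn (NormalWord.ofGroup d g) ofGroup cons = ofGroup g := rfl

@[simp]
theorem consRecOn_cons {motive : NWord A B d → Sort*}
    (g : H) (p : ι × ℤˣ) (w : NWord A B d) (h1 : w.head ∈ d.set p)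
    (h2 : ∀ p' ∈ Option.map Prod.fst w.toList.head?,
      w.head ∈ toSub A B p → p' ≠ np p)
    (ofGroup : ∀ g, motive (ofGroup d g))
    (cons : ∀ (g : H) (p : ι × ℤˣ) (w : NWord A B d) (h1 : w.head ∈ d.set p)
      (h2 : ∀ p' ∈ Option.map Prod.fst w.toList.head?,
        w.head ∈ toSub A B p → p' ≠ np p),
      motive w → motive (cons g p w h1 h2)) :
    consRecOn (NormalWord.cons g p w h1 h2) ofGroup cons = cons g p w h1 h2
      (consRecOn w ofGroup cons) := rfl

@[simp]
theorem smul_cons (g₁ g₂ : H) (p : ι × ℤˣ) (w : NWord A B d) (h1 : w.head ∈ d.set p)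
    (h2 : ∀ p' ∈ Option.map Prod.fst w.toList.head?, w.head ∈ toSub A B p → p' ≠ np p) :
    g₁ • cons g₂ p w h1 h2 = cons (g₁ * g₂) p w h1 h2 :=
  rfl

@[simp]
theorem smul_ofGroup (g₁ g₂ : H) :
    g₁ • (ofGroup d g₂ : NWord A B d) = ofGroup d (g₁ * g₂) := rfl

@[simp] theorem group_smul_head (g : H) (w : NWord A B d) : (g • w).head = g * w.head := rfl
@[simp] theorem group_smul_toList (g : H) (w : NWord A B d) : (g • w).toList = w.toList := rfl

variable (d)

/-- The action of `t_p` on an element of `H`: decomposition into subgroup and coset parts. -/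
noncomputable def unitsSMulGroup (p : ι × ℤˣ) (g : H) :
    (toSub A B (np p)) × d.set p :=
  let g' := (d.compl p).equiv g
  (toSubEquiv φ p g'.1, g'.2)

theorem unitsSMulGroup_snd (p : ι × ℤˣ) (g : H) :
    (unitsSMulGroup φ d p g).2 = ((d.compl p).equiv g).2 := rfl

variable {d}

/-- Whether `t_p` cancels against the start of `w`. -/
def Cancels (p : ι × ℤˣ) (w : NWord A B d) : Prop :=
  (w.head ∈ (toSub A B p : Subgroup H)) ∧ w.toList.head?.map Prod.fst = some (np p)

/-- Multiplying `t_p` by `w` when there is cancellation. -/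
def unitsSMulWithCancel (p : ι × ℤˣ) (w : NWord A B d) : Cancels p w → NWord A B d :=
  consRecOn w
    (by simp [Cancels, ofGroup]; tauto)
    (fun g _ w _ _ _ can => (toSubEquiv φ p ⟨g, can.1⟩ : H) • w)

/-- Multiplying `t_p` by a normal word `w`, putting the result in normal form. -/
noncomputable def unitsSMul (p : ι × ℤˣ) (w : NWord A B d) : NWord A B d :=
  letI := Classical.dec
  if h : Cancels p w
  then unitsSMulWithCancel φ p w h
  else
    let g' := unitsSMulGroup φ d p w.head
    cons (g'.1 : H) p (((g'.2 : H) * w.head⁻¹ : H) • w)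
      (by simp [unitsSMulGroup])
      (by
        intro p' hp' hmem
        simp only [group_smul_toList, Option.mem_def] at hp'
        simp only [group_smul_head, inv_mul_cancel_right] at hmem
        have hw : w.head ∈ toSub A B p := by
          rw [unitsSMulGroup_snd, (d.compl p).equiv_snd_eq_inv_mul] at hmem
          exact (mul_mem_cancel_left (inv_mem ((d.compl p).equiv w.head).1.2)).1 hmem
        intro hpnp
        exact h ⟨hw, by rw [hp', hpnp]⟩)

theorem not_cancels_of_cons_hyp (p : ι × ℤˣ) (w : NWord A B d)
    (h2 : ∀ p' ∈ Option.map Prod.fst w.toList.head?,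
      w.head ∈ toSub A B p → p' ≠ np p) :
    ¬ Cancels p w := by
  rintro ⟨hw, hhead⟩
  exact h2 (np p) (by simp [hhead]) hw rfl

theorem unitsSMul_cancels_iff (p : ι × ℤˣ) (w : NWord A B d) :
    Cancels (np p) (unitsSMul φ p w) ↔ ¬ Cancels p w := by
  by_cases h : Cancels p w
  · simp only [unitsSMul, h, dite_true, not_true_eq_false, iff_false]
    induction w using consRecOn with
    | ofGroup => simp [Cancels] at h
    | cons g p' w h1 h2 _ =>
      intro hc
      simp only [Cancels, cons_head, cons_toList, List.head?_cons,
        Option.map_some, Option.some.injEq] at h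
      cases h.2
      refine not_cancels_of_cons_hyp (np p) w h2 ?_
      simp only [unitsSMulWithCancel, consRecOn_cons] at hc
      exact ⟨(mul_mem_cancel_left (toSubEquiv φ p ⟨g, h.1⟩).2).1 hc.1, hc.2⟩
  · simp only [unitsSMul, dif_neg h]
    simpa [Cancels] using h


theorem unitsSMul_neg (p : ι × ℤˣ) (w : NWord A B d) :
    unitsSMul φ (np p) (unitsSMul φ p w) = w := by
  rw [unitsSMul]
  split_ifs with hcan
  · have hncan : ¬ Cancels p w := (unitsSMul_cancels_iff φ p w).1 hcan
    unfold unitsSMul at hcan ⊢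
    simp only [dif_neg hncan] at hcan ⊢
    simp only [unitsSMulWithCancel, consRecOn_cons]
    apply ext
    · simp only [unitsSMulGroup, group_smul_head, cons_head, Subtype.coe_eta,
        toSubEquiv_neg_apply, inv_mul_cancel_right]
      exact (d.compl p).equiv_fst_mul_equiv_snd w.head
    · rfl
  · have hcan2 : Cancels p w := not_not.1 (mt (unitsSMul_cancels_iff φ p w).2 hcan)
    unfold unitsSMul at hcan ⊢
    simp only [dif_pos hcan2] at hcan ⊢
    cases w using consRecOn with
    | ofGroup => simp [Cancels] at hcan2
    | cons g p' w h1 h2 ih =>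
      clear ih
      have hp' : p' = np p := by
        have := hcan2.2
        simp only [cons_toList, List.head?_cons, Option.map_some, Option.some.injEq] at this
        exact this
      subst hp'
      have hmem : g ∈ toSub A B p := hcan2.1
      simp only [unitsSMulWithCancel, consRecOn_cons]
      -- the current goal is about the word `(toSubEquiv φ p ⟨g, _⟩ : H) • w`
      have hfst : ((d.compl (np p)).equiv ((toSubEquiv φ p ⟨g, hmem⟩ : H) * w.head)) =
          (⟨(toSubEquiv φ p ⟨g, hmem⟩ : H), (toSubEquiv φ p ⟨g, hmem⟩).2⟩ *
            ((d.compl (np p)).equiv w.head).1, ((d.compl (np p)).equiv w.head).2) :=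
        (d.compl (np p)).equiv_mul_left _ w.head
      have h1' : ((d.compl (np p)).equiv w.head) = (1, ⟨w.head, h1⟩) := by
        have hf := (d.compl (np p)).equiv_fst_eq_one_of_mem_of_one_mem (one_mem _) h1
        have hs := (d.compl (np p)).equiv_snd_eq_self_of_mem_of_one_mem (one_mem _) h1
        ext
        · rw [hf]; rfl
        · rw [hs]
      rw [h1'] at hfst
      apply ext
      · simp only [unitsSMulGroup, cons_head, group_smul_head]
        rw [hfst]
        simp only [mul_one, Subtype.coe_eta]
        exact toSubEquiv_neg_apply φ p ⟨g, hmem⟩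
      · simp only [unitsSMulGroup, cons_toList, group_smul_toList, group_smul_head]
        rw [hfst]
        congr 1
        simp [group_smul_head, inv_mul_cancel_right]


theorem unitsSMul_group_smul (p : ι × ℤˣ) (s : toSub A B p) (w : NWord A B d) :
    unitsSMul φ p ((s : H) • w) = (toSubEquiv φ p s : H) • unitsSMul φ p w := by
  unfold unitsSMul
  have hc : Cancels p ((s : H) • w) ↔ Cancels p w := by
    simp [Cancels, mul_mem_cancel_left s.2]
  by_cases hcan : Cancels p w
  · simp only [dif_pos (hc.2 hcan), dif_pos hcan]
    cases w using consRecOn with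
    | ofGroup => simp [Cancels] at hcan
    | cons g p' w h1 h2 _ =>
      simp only [smul_cons, unitsSMulWithCancel, consRecOn_cons]
      rw [← mul_smul, ← Subgroup.coe_mul, ← map_mul]
      rfl
  · rw [dif_neg (mt hc.1 hcan), dif_neg hcan]
    apply ext
    · simp only [unitsSMulGroup, group_smul_head, cons_head]
      rw [(d.compl p).equiv_mul_left s w.head]
      simp [map_mul]
    · simp only [unitsSMulGroup, cons_toList, group_smul_toList, group_smul_head]
      rw [(d.compl p).equiv_mul_left s w.head]
      simp [mul_assoc]

/-- The permutation given by multiplication by `tt i`. -/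
noncomputable def unitsSMulEquiv (i : ι) : Equiv.Perm (NWord A B d) where
  toFun := unitsSMul φ ((i : ι), (1 : ℤˣ))
  invFun := unitsSMul φ ((i : ι), (-1 : ℤˣ))
  left_inv w := unitsSMul_neg φ ((i : ι), (1 : ℤˣ)) w
  right_inv w := by
    have h : ((i : ι), (1 : ℤˣ)) = np ((i : ι), (-1 : ℤˣ)) := by simp
    rw [h]
    exact unitsSMul_neg φ ((i : ι), (-1 : ℤˣ)) w

/-- The action of `MHNN A B φ` on normal words, as a homomorphism to permutations. -/
noncomputable def actHom : MHNN A B φ →* Equiv.Perm (NWord A B d) :=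
  PresentedGroup.toGroup (f := fun x => Sum.rec
      (fun h => MulAction.toPermHom H (NWord A B d) h)
      (fun i => unitsSMulEquiv φ (d := d) i) x) <| by
    rintro r (⟨h₁, h₂, rfl⟩ | ⟨i, a, rfl⟩)
    · simp only [map_mul, map_inv, FreeGroup.lift_apply_of]
      group
    · simp only [map_mul, map_inv, FreeGroup.lift_apply_of]
      rw [mul_inv_eq_one]
      have key : ∀ w : NWord A B d,
          (a : H) • unitsSMul φ ((i : ι), (1 : ℤˣ)) w =
            unitsSMul φ ((i : ι), (1 : ℤˣ)) (((φ i a : B i) : H) • w) := by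
        intro w
        have := unitsSMul_group_smul φ ((i : ι), (1 : ℤˣ))
          ⟨((φ i a : B i) : H), (φ i a).2⟩ w
        rw [this, toSubEquiv_one_coe]
        congr 1
        simp
        exact ((φ i).symm_apply_apply a).symm
      ext w : 1
      simp only [Equiv.Perm.mul_apply]
      show ((unitsSMulEquiv φ (d := d) i)⁻¹ : Equiv.Perm (NWord A B d))
          ((a : H) • (unitsSMulEquiv φ (d := d) i) w) = ((φ i a : B i) : H) • w
      rw [show (unitsSMulEquiv φ (d := d) i) w = unitsSMul φ ((i : ι), (1 : ℤˣ)) w from rfl,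
        key]
      exact (unitsSMulEquiv φ i).left_inv _

noncomputable instance : MulAction (MHNN A B φ) (NWord A B d) :=
  MulAction.ofEndHom <| (MulAction.toEndHom (M := Equiv.Perm (NWord A B d))).comp (actHom φ)

theorem mhnn_smul_def (x : MHNN A B φ) (w : NWord A B d) :
    x • w = (actHom φ (d := d) x) w := rfl

theorem actHom_ofH (h : H) :
    actHom φ (d := d) (ofH A B φ h) = MulAction.toPermHom H (NWord A B d) h :=
  PresentedGroup.toGroup.of _

theorem actHom_tt (i : ι) :
    actHom φ (d := d) (tt A B φ i) = unitsSMulEquiv φ i :=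
  PresentedGroup.toGroup.of _

theorem of_smul_eq_smul (h : H) (w : NWord A B d) :
    (ofH A B φ h) • w = h • w := by
  rw [mhnn_smul_def, actHom_ofH]; rfl

theorem tt_smul_eq_unitsSMul (i : ι) (w : NWord A B d) :
    (tt A B φ i) • w = unitsSMul φ ((i : ι), (1 : ℤˣ)) w := by
  rw [mhnn_smul_def, actHom_tt]; rfl

theorem tp_smul_eq_unitsSMul (p : ι × ℤˣ) (w : NWord A B d) :
    (tp A B φ p) • w = unitsSMul φ p w := by
  obtain ⟨i, u⟩ := p
  rcases Int.units_eq_one_or u with rfl | rfl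
  · rw [show tp A B φ ((i : ι), (1 : ℤˣ)) = tt A B φ i from zpow_one _]
    exact tt_smul_eq_unitsSMul φ i w
  · rw [show tp A B φ ((i : ι), (-1 : ℤˣ)) = (tt A B φ i)⁻¹ from zpow_neg_one _]
    rw [inv_smul_eq_iff, tt_smul_eq_unitsSMul]
    symm
    have h : ((i : ι), (1 : ℤˣ)) = np ((i : ι), (-1 : ℤˣ)) := by simp
    rw [h]
    exact unitsSMul_neg φ _ w

/-- The product of a normal word. -/
def prodW (w : NWord A B d) : MHNN A B φ := RW.prod φ w.toRW

@[simp]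
theorem prodW_group_smul (g : H) (w : NWord A B d) :
    prodW φ (g • w) = ofH A B φ g * prodW φ w := by
  simp [prodW, RW.prod, mul_assoc]

@[simp]
theorem prodW_empty : prodW φ (empty d) = 1 := by
  simp [prodW, RW.prod, empty]

@[simp]
theorem prodW_ofGroup (g : H) : prodW φ (ofGroup d g) = ofH A B φ g := by
  simp [prodW, RW.prod, ofGroup]

@[simp]
theorem prodW_cons (g : H) (p : ι × ℤˣ) (w : NWord A B d) (h1 : w.head ∈ d.set p)
    (h2 : ∀ p' ∈ Option.map Prod.fst w.toList.head?, w.head ∈ toSub A B p → p' ≠ np p) :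
    prodW φ (cons g p w h1 h2) = ofH A B φ g * (tp A B φ p * prodW φ w) := by
  simp [prodW, RW.prod, cons, mul_assoc]

theorem prodW_unitsSMul (p : ι × ℤˣ) (w : NWord A B d) :
    prodW φ (unitsSMul φ p w) = tp A B φ p * prodW φ w := by
  rw [unitsSMul]
  split_ifs with hcan
  · cases w using consRecOn with
    | ofGroup => simp [Cancels] at hcan
    | cons g p' w h1 h2 _ =>
      have hp' : p' = np p := by
        have := hcan.2
        simp only [cons_toList, List.head?_cons, Option.map_some, Option.some.injEq] at this
        exact this
      subst hp'
      have hmem : g ∈ toSub A B p := hcan.1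
      simp only [unitsSMulWithCancel, consRecOn_cons, prodW_group_smul, prodW_cons]
      rw [equivM_eq_conj]
      rw [tp_np]
      group
  · simp only [prodW_cons, prodW_group_smul]
    -- goal: ofH g'.1 * (tp p * (ofH (g'.2 * w.head⁻¹) * prodW w)) = tp p * prodW w
    have heq : ((unitsSMulGroup φ d p w.head).1 : H) =
        (toSubEquiv φ p ((d.compl p).equiv w.head).1 : H) := rfl
    have hsnd : ((unitsSMulGroup φ d p w.head).2 : H) = ((d.compl p).equiv w.head).2 := by
      rw [unitsSMulGroup_snd]
    rw [heq, hsnd, equivM_eq_conj, map_mul]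
    have hfs : (((d.compl p).equiv w.head).1 : H) * ((d.compl p).equiv w.head).2 = w.head :=
      (d.compl p).equiv_fst_mul_equiv_snd w.head
    calc tp A B φ p * ofH A B φ (((d.compl p).equiv w.head).1 : H) * (tp A B φ p)⁻¹ *
          (tp A B φ p * (ofH A B φ (((d.compl p).equiv w.head).2 : H) *
            ofH A B φ w.head⁻¹ * prodW φ w))
        = tp A B φ p * ofH A B φ ((((d.compl p).equiv w.head).1 : H) *
            ((d.compl p).equiv w.head).2 * w.head⁻¹) * prodW φ w := by
          simp only [map_mul]
          group
      _ = tp A B φ p * prodW φ w := by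
          rw [hfs]
          simp

/-- Induction over `MHNN`. -/
theorem _root_.MHNN.induction_on' {C : MHNN A B φ → Prop}
    (x : MHNN A B φ) (hof : ∀ h, C (ofH A B φ h)) (ht : ∀ i, C (tt A B φ i))
    (hmul : ∀ x y, C x → C y → C (x * y)) (hinv : ∀ x, C x → C x⁻¹) : C x := by
  let S : Subgroup (MHNN A B φ) :=
    { carrier := setOf C
      one_mem' := by show C 1; simpa using hof 1
      mul_mem' := fun {a b} ha hb => hmul a b ha hb
      inv_mem' := fun {a} ha => hinv a ha }
  refine PresentedGroup.generated_by _ S ?_ x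
  rintro (h | i)
  · exact hof h
  · exact ht i

@[simp]
theorem prodW_smul (g : MHNN A B φ) (w : NWord A B d) :
    prodW φ (g • w) = g * prodW φ w := by
  induction g using MHNN.induction_on' generalizing w with
  | hof h => rw [of_smul_eq_smul]; simp
  | ht i =>
    rw [tt_smul_eq_unitsSMul, prodW_unitsSMul,
      show tp A B φ ((i : ι), (1 : ℤˣ)) = tt A B φ i from zpow_one _]
  | hmul x y ihx ihy => rw [mul_smul, ihx, ihy, mul_assoc]
  | hinv x ih =>
    rw [← mul_right_inj x, ← ih, smul_inv_smul]
    simp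


@[simp]
theorem prodW_smul_empty (w : NWord A B d) : (prodW φ w) • (empty d) = w := by
  induction w using consRecOn with
  | ofGroup g =>
    rw [prodW_ofGroup, of_smul_eq_smul]
    exact ext (mul_one g) rfl
  | cons g p w h1 h2 ih =>
    rw [prodW_cons, mul_smul, mul_smul, ih, tp_smul_eq_unitsSMul, of_smul_eq_smul, unitsSMul,
      dif_neg (not_cancels_of_cons_hyp p w h2)]
    have hfst1 : ((d.compl p).equiv w.head).1 = 1 :=
      (d.compl p).equiv_fst_eq_one_of_mem_of_one_mem (one_mem _) h1
    apply ext
    · simp only [smul_cons, cons_head, unitsSMulGroup, hfst1, map_one]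
      simp
    · simp only [smul_cons, cons_toList, unitsSMulGroup, group_smul_toList, group_smul_head]
      rw [(d.compl p).equiv_snd_eq_inv_mul, hfst1]
      simp

variable (d)

/-- The equivalence between elements of `MHNN` and normal words. -/
noncomputable def nequiv : MHNN A B φ ≃ NWord A B d where
  toFun g := g • empty d
  invFun w := prodW φ w
  left_inv g := by simp
  right_inv w := by simp

theorem prodW_injective : Injective (fun w : NWord A B d => prodW φ w) :=
  (nequiv φ d).symm.injective

variable {d}

theorem ofH_injective : Injective (ofH A B φ) := by
  obtain ⟨d⟩ := TransversalPair.nonempty H A B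
  intro x y h
  have h2 : (ofH A B φ x) • (empty d) = (ofH A B φ y) • (empty d) := by rw [h]
  rw [of_smul_eq_smul, of_smul_eq_smul] at h2
  have h3 := congrArg (fun w : NWord A B d => w.head) h2
  simpa using h3

theorem exists_normalWord_prod_eq (w : RW H A B) :
    ∃ w' : NWord A B d, prodW φ w' = RW.prod φ w ∧
      w'.toList.map Prod.fst = w.toList.map Prod.fst ∧
      ∀ p ∈ (w.toList.head?.map Prod.fst), w'.head⁻¹ * w.head ∈ toSub A B (np p) := by
  suffices hsuf : ∀ w : RW H A B, w.head = 1 →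
      ∃ w' : NWord A B d, prodW φ w' = RW.prod φ w ∧
      w'.toList.map Prod.fst = w.toList.map Prod.fst ∧
      ∀ p ∈ (w.toList.head?.map Prod.fst), w'.head ∈ toSub A B (np p) by
    by_cases hw1 : w.head = 1
    · rcases hsuf w hw1 with ⟨w', hw'1, hw'2, hw'3⟩
      exact ⟨w', hw'1, hw'2, fun p hp => by
        rw [hw1, mul_one, inv_mem_iff]; exact hw'3 p hp⟩
    · rcases hsuf ⟨1, w.toList, w.chain⟩ rfl with ⟨w', hw'1, hw'2, hw'3⟩
      refine ⟨w.head • w', ?_, by simpa using hw'2, fun p hp => ?_⟩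
      · rw [prodW_group_smul, hw'1]
        rcases w with ⟨g, l, ch⟩
        simp [RW.prod, mul_assoc]
      · have := hw'3 p (by simpa using hp)
        simpa [mul_assoc] using this
  intro w hw1
  rcases w with ⟨g, l, chain⟩
  dsimp at hw1; subst hw1
  induction l with
  | nil =>
    exact ⟨empty d, by simp [RW.prod, prodW, empty], by simp [empty], by simp⟩
  | cons a l ih =>
    rcases ih (List.isChain_cons.1 chain).2 with ⟨w', hw'1, hw'2, hw'3⟩
    have hnc : ¬ Cancels a.1 (a.2 • w') := by
      rintro ⟨hS, hx⟩
      simp only [group_smul_toList] at hx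
      rcases Option.map_eq_some_iff.1 hx with ⟨⟨q, b⟩, hq, hq2⟩
      dsimp at hq2; subst hq2
      -- first letter of l is (np a.1)
      have hx' : l.head?.map Prod.fst = some (np a.1) := by
        rw [← List.head?_map, ← hw'2, List.head?_map, hq, Option.map_some]
      have hwh : w'.head ∈ toSub A B a.1 := by
        have := hw'3 _ hx'
        rwa [np_np] at this
      have hS' : a.2 ∈ toSub A B a.1 := by
        rw [group_smul_head] at hS
        exact (mul_mem_cancel_right hwh).1 hS
      have hl : l ≠ [] := by
        rintro rfl
        simp at hx'
      have hchain := (List.isChain_cons.1 chain).1 (l.head hl) (List.head?_eq_head _)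
      have : (l.head hl).1 = np a.1 := by
        rw [List.head?_eq_head hl, Option.map_some, Option.some.injEq] at hx'
        exact hx'
      exact hchain hS' this
    refine ⟨(tp A B φ a.1 * ofH A B φ a.2 : MHNN A B φ) • w', ?_, ?_, ?_⟩
    · rw [prodW_smul, hw'1]
      simp [RW.prod, mul_assoc]
    · rw [mul_smul, of_smul_eq_smul, tp_smul_eq_unitsSMul, unitsSMul, dif_neg hnc]
      simp only [cons_toList, group_smul_toList, List.map_cons]
      rw [hw'2]
    · intro p hp
      simp only [List.head?_cons, Option.map_some, Option.mem_def, Option.some.injEq] at hp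
      subst hp
      rw [mul_smul, of_smul_eq_smul, tp_smul_eq_unitsSMul, unitsSMul, dif_neg hnc]
      simp only [cons_head]
      exact ((unitsSMulGroup φ d a.1 (a.2 • w').head).1).2

theorem map_fst_eq_and_of_prod_eq {w₁ w₂ : RW H A B}
    (hprod : RW.prod φ w₁ = RW.prod φ w₂) :
    w₁.toList.map Prod.fst = w₂.toList.map Prod.fst ∧
      ∀ p ∈ w₁.toList.head?.map Prod.fst,
        w₁.head⁻¹ * w₂.head ∈ toSub A B (np p) := by
  obtain ⟨d⟩ := TransversalPair.nonempty H A B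
  rcases exists_normalWord_prod_eq (d := d) φ w₁ with ⟨w₁', hw₁'1, hw₁'2, hw₁'3⟩
  rcases exists_normalWord_prod_eq (d := d) φ w₂ with ⟨w₂', hw₂'1, hw₂'2, hw₂'3⟩
  have : w₁' = w₂' := prodW_injective φ d (by dsimp only; rw [hw₁'1, hw₂'1, hprod])
  subst this
  refine ⟨by rw [← hw₁'2, hw₂'2], ?_⟩
  intro p hp
  have h1 := hw₁'3 p hp
  have h2 := hw₂'3 p (by rwa [← List.head?_map, ← hw₂'2, hw₁'2, List.head?_map])
  have := mul_mem (inv_mem h1) h2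
  simpa [mul_assoc] using this


end NormalWord

open NormalWord

variable {H : Type*} [Group H] {ι : Type*} {A B : ι → Subgroup H} {φ : ∀ i, A i ≃* B i}

/-- `±1` as a unit. -/
def toUnit (e : ℤ) : ℤˣ := if e = 1 then 1 else -1

theorem toUnit_coe {e : ℤ} (he : e = 1 ∨ e = -1) : ((toUnit e : ℤˣ) : ℤ) = e := by
  rcases he with rfl | rfl <;> simp [toUnit]

theorem toUnit_inj {e e' : ℤ} (he : e = 1 ∨ e = -1) (he' : e' = 1 ∨ e' = -1)
    (h : toUnit e = toUnit e') : e = e' := by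
  rcases he with rfl | rfl <;> rcases he' with rfl | rfl <;> simp_all [toUnit]

theorem toSub_np_toUnit (A B : ι → Subgroup H) (i : ι) {e : ℤ} (he : e = 1 ∨ e = -1) :
    toSub A B (np (i, toUnit e)) = side A B i e := by
  rcases he with rfl | rfl <;> simp [toUnit, side, np, toSub]

theorem side_eq_toSub (A B : ι → Subgroup H) (i : ι) {e : ℤ} (he : e = 1 ∨ e = -1) :
    side A B i e = toSub A B (i, -(toUnit e)) := by
  rcases he with rfl | rfl <;> simp [toUnit, side, toSub]

variable (A B φ)

theorem wordProd_zero (u : ℕ → H) (idx : ℕ → ι) (e : ℕ → ℤ) :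
    wordProd A B φ 0 u idx e = ofH A B φ (u 0) := by
  simp [wordProd, ofH_eq]

theorem wordProd_succ (ℓ : ℕ) (u : ℕ → H) (idx : ℕ → ι) (e : ℕ → ℤ) :
    wordProd A B φ (ℓ + 1) u idx e =
      ofH A B φ (u 0) * (tt A B φ (idx 0)) ^ (e 0) *
        wordProd A B φ ℓ (fun k => u (k + 1)) (fun k => idx (k + 1)) (fun k => e (k + 1)) := by
  unfold wordProd
  rw [List.range_succ_eq_map, List.map_cons, List.prod_cons, List.map_map]
  have hmap : (List.map ((fun k => gen A B φ (Sum.inr (idx k)) ^ e k *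
        gen A B φ (Sum.inl (u (k + 1)))) ∘ Nat.succ) (List.range ℓ)) =
      List.map (fun k => gen A B φ (Sum.inr (idx (k + 1))) ^ e (k + 1) *
        gen A B φ (Sum.inl (u (k + 1 + 1)))) (List.range ℓ) := rfl
  rw [hmap]
  simp only [ofH_eq, tt_eq]
  simp [mul_assoc]

theorem wordProd_congr (ℓ : ℕ) (u : ℕ → H) (idx idx' : ℕ → ι) (e e' : ℕ → ℤ)
    (h : ∀ k < ℓ, idx k = idx' k ∧ e k = e' k) :
    wordProd A B φ ℓ u idx e = wordProd A B φ ℓ u idx' e' := by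
  unfold wordProd
  congr 1
  apply congrArg List.prod
  apply List.map_congr_left
  intro k hk
  rw [List.mem_range] at hk
  rw [(h k hk).1, (h k hk).2]

/-- The transfer of an element across the `k`-th stable letter. -/
def transfer (i : ι) (e : ℤ) (x c' : H) : Prop :=
  (e = 1 ∧ ∃ h : x ∈ A i, c' = ((φ i ⟨x, h⟩ : B i) : H)) ∨
  (e = -1 ∧ ∃ h : x ∈ B i, c' = (((φ i).symm ⟨x, h⟩ : A i) : H))

/-- Two words with the same stable letters are related by a chain of subgroup elements. -/
def Matched (ℓ : ℕ) (u v : ℕ → H) (idx : ℕ → ι) (e : ℕ → ℤ) : Prop :=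
  ∃ c : ℕ → H, c 0 = 1 ∧ (v ℓ)⁻¹ * c ℓ * u ℓ = 1 ∧
    ∀ k < ℓ, transfer A B φ (idx k) (e k) ((v k)⁻¹ * c k * u k) (c (k + 1))

theorem transfer_mem_side {i : ι} {e : ℤ} {x c' : H}
    (h : transfer A B φ i e x c') : x ∈ side A B i e := by
  rcases h with ⟨rfl, hx, _⟩ | ⟨rfl, hx, _⟩ <;> simp [side, hx]

/-- The key relation: if `transfer i e x c'` then `x * t^e = t^e * c'`. -/
theorem transfer_mul_tt {i : ι} {e : ℤ} {x c' : H}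
    (h : transfer A B φ i e x c') :
    ofH A B φ x * (tt A B φ i) ^ e = (tt A B φ i) ^ e * ofH A B φ c' := by
  rcases h with ⟨rfl, hx, rfl⟩ | ⟨rfl, hx, rfl⟩
  · rw [zpow_one]
    exact ofH_mul_tt i ⟨x, hx⟩
  · rw [zpow_neg_one]
    exact ofH_mul_inv_tt i ⟨x, hx⟩

/-- Telescoping: a chain of transfers gives equality of word products. -/
theorem wordProd_eq_of_chain : ∀ (ℓ : ℕ) (u v c : ℕ → H) (idx : ℕ → ι) (e : ℕ → ℤ),
    ((v ℓ)⁻¹ * c ℓ * u ℓ = 1) →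
    (∀ k < ℓ, transfer A B φ (idx k) (e k) ((v k)⁻¹ * c k * u k) (c (k + 1))) →
    ofH A B φ (c 0) * wordProd A B φ ℓ u idx e = wordProd A B φ ℓ v idx e := by
  intro ℓ
  induction ℓ with
  | zero =>
    intro u v c idx e hfin _
    rw [wordProd_zero, wordProd_zero, ← map_mul]
    congr 1
    have : v 0 * ((v 0)⁻¹ * c 0 * u 0) = v 0 * 1 := by rw [hfin]
    rw [mul_one] at this
    rw [← this]
    group
  | succ n ih =>
    intro u v c idx e hfin htr
    rw [wordProd_succ, wordProd_succ]
    have h0 := htr 0 (Nat.succ_pos n)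
    have hx : ofH A B φ ((v 0)⁻¹ * c 0 * u 0) * (tt A B φ (idx 0)) ^ (e 0) =
        (tt A B φ (idx 0)) ^ (e 0) * ofH A B φ (c 1) := transfer_mul_tt A B φ h0
    have ihs := ih (fun k => u (k + 1)) (fun k => v (k + 1)) (fun k => c (k + 1))
      (fun k => idx (k + 1)) (fun k => e (k + 1)) hfin
      (fun k hk => htr (k + 1) (Nat.succ_lt_succ hk))
    calc ofH A B φ (c 0) * (ofH A B φ (u 0) * tt A B φ (idx 0) ^ e 0 *
          wordProd A B φ n (fun k => u (k + 1)) (fun k => idx (k + 1)) (fun k => e (k + 1)))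
        = ofH A B φ (v 0) * (ofH A B φ ((v 0)⁻¹ * c 0 * u 0) * tt A B φ (idx 0) ^ e 0) *
          wordProd A B φ n (fun k => u (k + 1)) (fun k => idx (k + 1)) (fun k => e (k + 1)) := by
          simp only [map_mul, map_inv]
          group
      _ = ofH A B φ (v 0) * tt A B φ (idx 0) ^ e 0 * (ofH A B φ (c 1) *
          wordProd A B φ n (fun k => u (k + 1)) (fun k => idx (k + 1)) (fun k => e (k + 1))) := by
          rw [hx]; group
      _ = _ := by rw [ihs]

variable {A B φ}

/-- The list of letters of a function-style word. -/
def letterList (ℓ : ℕ) (u : ℕ → H) (idx : ℕ → ι) (e : ℕ → ℤ) : List ((ι × ℤˣ) × H) :=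
  (List.range ℓ).map fun k => ((idx k, toUnit (e k)), u (k + 1))

theorem chain_letterList {ℓ : ℕ} {u : ℕ → H} {idx : ℕ → ι} {e : ℕ → ℤ}
    (hred : ReducedWord A B ℓ u idx e) :
    (letterList ℓ u idx e).Chain' (fun a b => a.2 ∈ toSub A B a.1 → b.1 ≠ np a.1) := by
  cases ℓ with
  | zero => simp [letterList, List.Chain']
  | succ n =>
    rw [letterList, List.Chain', List.isChain_map, List.isChain_range_succ]
    intro m hm hmem heq
    have hem : e m = 1 ∨ e m = -1 := hred.1 m (by omega)
    have hem1 : e (m + 1) = 1 ∨ e (m + 1) = -1 := hred.1 (m + 1) (by omega)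
    have h1 : idx m = idx (m + 1) := ((Prod.ext_iff.1 heq).1).symm
    have h2 : toUnit (e (m + 1)) = -toUnit (e m) := (Prod.ext_iff.1 heq).2
    have h3 : e m = -e (m + 1) := by
      rcases hem with he | he <;> rcases hem1 with he1 | he1 <;>
        simp_all [toUnit] <;> omega
    refine hred.2 m (by omega) h1 h3 ?_
    rw [side_eq_toSub A B _ hem1]
    have h4 : -toUnit (e (m + 1)) = toUnit (e m) := by rw [h2, neg_neg]
    rw [← h4] at hmem
    simpa using hmem

theorem wordProd_eq_listProd {ℓ : ℕ} {u : ℕ → H} {idx : ℕ → ι} {e : ℕ → ℤ}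
    (hE : ∀ k < ℓ, e k = 1 ∨ e k = -1) :
    wordProd A B φ ℓ u idx e =
      ofH A B φ (u 0) *
        ((letterList ℓ u idx e).map (fun x => tp A B φ x.1 * ofH A B φ x.2)).prod := by
  unfold wordProd letterList
  rw [List.map_map]
  congr 1
  apply congrArg List.prod
  apply List.map_congr_left
  intro k hk
  rw [List.mem_range] at hk
  simp only [Function.comp]
  rw [show tp A B φ (idx k, toUnit (e k)) = tt A B φ (idx k) ^ ((toUnit (e k) : ℤˣ) : ℤ) from rfl]
  rw [toUnit_coe (hE k hk)]
  rfl

/-- The list-style word of a reduced function-style word. -/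
def toRW {ℓ : ℕ} {u : ℕ → H} {idx : ℕ → ι} {e : ℕ → ℤ}
    (hred : ReducedWord A B ℓ u idx e) : RW H A B :=
  ⟨u 0, letterList ℓ u idx e, chain_letterList hred⟩

theorem RWprod_toRW {ℓ : ℕ} {u : ℕ → H} {idx : ℕ → ι} {e : ℕ → ℤ}
    (hred : ReducedWord A B ℓ u idx e) :
    RW.prod φ (toRW hred) = wordProd A B φ ℓ u idx e :=
  (wordProd_eq_listProd hred.1).symm

theorem head_coset {ℓ : ℕ} {u v : ℕ → H} {idx : ℕ → ι} {e : ℕ → ℤ}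
    (hu : ReducedWord A B (ℓ + 1) u idx e) (hv : ReducedWord A B (ℓ + 1) v idx e)
    (h : wordProd A B φ (ℓ + 1) u idx e = wordProd A B φ (ℓ + 1) v idx e) :
    (u 0)⁻¹ * v 0 ∈ side A B (idx 0) (e 0) := by
  have hmap := map_fst_eq_and_of_prod_eq φ (w₁ := toRW hu) (w₂ := toRW hv)
    (by rw [RWprod_toRW, RWprod_toRW]; exact h)
  have hhead : ((toRW hu).toList.head?.map Prod.fst) = some (idx 0, toUnit (e 0)) := by
    show ((letterList (ℓ + 1) u idx e).head?.map Prod.fst) = _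
    rw [letterList, List.range_succ_eq_map]
    rfl
  have h3 := hmap.2 (idx 0, toUnit (e 0)) (by rw [hhead]; rfl)
  rwa [toSub_np_toUnit A B _ (hu.1 0 (Nat.succ_pos ℓ))] at h3

theorem ReducedWord.shift {n : ℕ} {u : ℕ → H} {idx : ℕ → ι} {e : ℕ → ℤ}
    (h : ReducedWord A B (n + 1) u idx e) :
    ReducedWord A B n (fun k => u (k + 1)) (fun k => idx (k + 1)) (fun k => e (k + 1)) :=
  ⟨fun k hk => h.1 (k + 1) (by omega),
   fun k hk h1 h2 => h.2 (k + 1) (by omega) h1 h2⟩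

variable (A B φ)

theorem chain_of_eq_of_reduced : ∀ (ℓ : ℕ) (g : H) (u v : ℕ → H) (idx : ℕ → ι) (e : ℕ → ℤ),
    ReducedWord A B ℓ u idx e → ReducedWord A B ℓ v idx e →
    ofH A B φ g * wordProd A B φ ℓ u idx e = wordProd A B φ ℓ v idx e →
    ∃ c : ℕ → H, c 0 = g ∧ (v ℓ)⁻¹ * c ℓ * u ℓ = 1 ∧
      ∀ k < ℓ, transfer A B φ (idx k) (e k) ((v k)⁻¹ * c k * u k) (c (k + 1)) := by
  intro ℓ
  induction ℓ with
  | zero =>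
    intro g u v idx e hu hv heq
    rw [wordProd_zero, wordProd_zero, ← map_mul] at heq
    have h1 : g * u 0 = v 0 := NormalWord.ofH_injective φ heq
    refine ⟨fun _ => g, rfl, by rw [← h1]; group, fun k hk => absurd hk (Nat.not_lt_zero k)⟩
  | succ n ih =>
    intro g u v idx e hu hv heq
    -- the word with `g` merged into the head
    set u' : ℕ → H := fun k => if k = 0 then g * u 0 else u k with hu'def
    have hu' : ReducedWord A B (n + 1) u' idx e :=
      ⟨hu.1, fun k hk h1 h2 => by
        have : u' (k + 1) = u (k + 1) := if_neg (Nat.succ_ne_zero k)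
        rw [this]; exact hu.2 k hk h1 h2⟩
    have hw : wordProd A B φ (n + 1) u' idx e =
        ofH A B φ g * wordProd A B φ (n + 1) u idx e := by
      unfold wordProd
      rw [← mul_assoc]
      have hhead : gen A B φ (Sum.inl (u' 0)) = ofH A B φ g * gen A B φ (Sum.inl (u 0)) := by
        rw [← ofH_eq A B φ, ← ofH_eq A B φ, ← map_mul]
        simp [hu'def]
      rw [hhead]
      have hlist : (List.map (fun k => gen A B φ (Sum.inr (idx k)) ^ e k *
            gen A B φ (Sum.inl (u' (k + 1)))) (List.range (n + 1))) =
          (List.map (fun k => gen A B φ (Sum.inr (idx k)) ^ e k *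
            gen A B φ (Sum.inl (u (k + 1)))) (List.range (n + 1))) := by
        apply List.map_congr_left
        intro k _
        rw [show u' (k + 1) = u (k + 1) from if_neg (Nat.succ_ne_zero k)]
      rw [hlist]
    have heq' : wordProd A B φ (n + 1) u' idx e = wordProd A B φ (n + 1) v idx e := by
      rw [hw]; exact heq
    have hx0 : (u' 0)⁻¹ * v 0 ∈ side A B (idx 0) (e 0) := head_coset hu' hv heq'
    have hx0' : (u' 0)⁻¹ * v 0 = ((v 0)⁻¹ * g * u 0)⁻¹ := by
      simp [hu'def, mul_assoc]
    set x : H := (v 0)⁻¹ * g * u 0 with hxdef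
    have hx : x ∈ side A B (idx 0) (e 0) := by
      rw [hx0'] at hx0
      exact (inv_mem_iff).1 hx0
    have hex : ∃ c1, transfer A B φ (idx 0) (e 0) x c1 := by
      rcases hu.1 0 (Nat.succ_pos n) with he | he
      · have hxA : x ∈ A (idx 0) := by rwa [he, side, if_pos rfl] at hx
        exact ⟨_, Or.inl ⟨he, hxA, rfl⟩⟩
      · have hxB : x ∈ B (idx 0) := by
          rw [he, side] at hx
          simpa using hx
        exact ⟨_, Or.inr ⟨he, hxB, rfl⟩⟩
    obtain ⟨c1, htr0⟩ := hex
    -- tail equality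
    have htt := transfer_mul_tt A B φ htr0
    rw [wordProd_succ, wordProd_succ] at heq
    have hv0x : ofH A B φ g * ofH A B φ (u 0) = ofH A B φ (v 0) * ofH A B φ x := by
      rw [← map_mul, ← map_mul]
      congr 1
      rw [hxdef]
      group
    have htail : ofH A B φ c1 *
        wordProd A B φ n (fun k => u (k + 1)) (fun k => idx (k + 1)) (fun k => e (k + 1)) =
        wordProd A B φ n (fun k => v (k + 1)) (fun k => idx (k + 1)) (fun k => e (k + 1)) := by
      have step : ofH A B φ (v 0) * (tt A B φ (idx 0) ^ e 0 * (ofH A B φ c1 *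
          wordProd A B φ n (fun k => u (k + 1)) (fun k => idx (k + 1)) (fun k => e (k + 1)))) =
          ofH A B φ (v 0) * (tt A B φ (idx 0) ^ e 0 *
          wordProd A B φ n (fun k => v (k + 1)) (fun k => idx (k + 1)) (fun k => e (k + 1))) := by
        calc ofH A B φ (v 0) * (tt A B φ (idx 0) ^ e 0 * (ofH A B φ c1 *
              wordProd A B φ n (fun k => u (k + 1)) (fun k => idx (k + 1)) (fun k => e (k + 1))))
            = ofH A B φ (v 0) * (ofH A B φ x * tt A B φ (idx 0) ^ e 0) *
              wordProd A B φ n (fun k => u (k + 1)) (fun k => idx (k + 1))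
                (fun k => e (k + 1)) := by rw [htt]; group
          _ = ofH A B φ g * ofH A B φ (u 0) * tt A B φ (idx 0) ^ e 0 *
              wordProd A B φ n (fun k => u (k + 1)) (fun k => idx (k + 1))
                (fun k => e (k + 1)) := by rw [← mul_assoc, hv0x]
          _ = ofH A B φ g * (ofH A B φ (u 0) * tt A B φ (idx 0) ^ e 0 *
              wordProd A B φ n (fun k => u (k + 1)) (fun k => idx (k + 1))
                (fun k => e (k + 1))) := by group
          _ = ofH A B φ (v 0) * tt A B φ (idx 0) ^ e 0 *
              wordProd A B φ n (fun k => v (k + 1)) (fun k => idx (k + 1))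
                (fun k => e (k + 1)) := heq
          _ = _ := by group
      exact mul_left_cancel (mul_left_cancel step)
    obtain ⟨c', hc'0, hc'fin, hc'tr⟩ := ih c1 (fun k => u (k + 1)) (fun k => v (k + 1))
      (fun k => idx (k + 1)) (fun k => e (k + 1)) (ReducedWord.shift hu) (ReducedWord.shift hv) htail
    refine ⟨fun k => Nat.casesOn k g (fun k => c' k), rfl, hc'fin, ?_⟩
    intro k hk
    cases k with
    | zero =>
      show transfer A B φ (idx 0) (e 0) ((v 0)⁻¹ * g * u 0) (c' 0)
      rw [hc'0]
      exact htr0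
    | succ k => exact hc'tr k (by omega)

variable {A B φ}

theorem seq_eq_of_prod_eq {ℓ m : ℕ} {u v : ℕ → H} {iu iv : ℕ → ι} {eu ev : ℕ → ℤ}
    (hu : ReducedWord A B ℓ u iu eu) (hv : ReducedWord A B m v iv ev)
    (h : wordProd A B φ ℓ u iu eu = wordProd A B φ m v iv ev) :
    ℓ = m ∧ ∀ k < m, iu k = iv k ∧ eu k = ev k := by
  have hmap := (map_fst_eq_and_of_prod_eq φ (w₁ := toRW hu) (w₂ := toRW hv)
    (by rw [RWprod_toRW, RWprod_toRW]; exact h)).1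
  have h1 : (List.range ℓ).map (fun k => ((iu k, toUnit (eu k)) : ι × ℤˣ)) =
      (List.range m).map (fun k => ((iv k, toUnit (ev k)) : ι × ℤˣ)) := by
    simpa [letterList, toRW, List.map_map, Function.comp_def] using hmap
  have hlen : ℓ = m := by simpa using congrArg List.length h1
  subst hlen
  refine ⟨rfl, fun k hk => ?_⟩
  have h2 := congrArg (fun l : List (ι × ℤˣ) => l[k]?) h1
  simp only [List.getElem?_map, List.getElem?_range, hk, if_pos, Option.map_some] at h2
  have h3 : ((iu k, toUnit (eu k)) : ι × ℤˣ) = (iv k, toUnit (ev k)) := by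
    exact Option.some_injective _ h2
  exact ⟨(Prod.ext_iff.1 h3).1, toUnit_inj (hu.1 k hk) (hv.1 k hk) (Prod.ext_iff.1 h3).2⟩

theorem ReducedWord_congr {ℓ : ℕ} {u : ℕ → H} {idx idx' : ℕ → ι} {e e' : ℕ → ℤ}
    (hsame : ∀ k < ℓ, idx k = idx' k ∧ e k = e' k)
    (h : ReducedWord A B ℓ u idx e) : ReducedWord A B ℓ u idx' e' := by
  constructor
  · intro k hk
    rw [← (hsame k hk).2]
    exact h.1 k hk
  · intro k hk h1 h2
    rw [← (hsame k (by omega)).1, ← (hsame (k + 1) hk).2]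
    apply h.2 k hk
    · rw [(hsame k (by omega)).1, (hsame (k + 1) hk).1]
      exact h1
    · rw [(hsame k (by omega)).2, (hsame (k + 1) hk).2]
      exact h2

variable (A B φ)

/-- **Characterization of equality of reduced words** in a multiple HNN extension. -/
theorem wordProd_eq_iff {ℓ m : ℕ} {u v : ℕ → H} {iu iv : ℕ → ι} {eu ev : ℕ → ℤ}
    (hu : ReducedWord A B ℓ u iu eu) (hv : ReducedWord A B m v iv ev) :
    wordProd A B φ ℓ u iu eu = wordProd A B φ m v iv ev ↔
      (ℓ = m ∧ (∀ k < m, iu k = iv k ∧ eu k = ev k) ∧ Matched A B φ m u v iv ev) := by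
  constructor
  · intro h
    obtain ⟨hlen, hseq⟩ := seq_eq_of_prod_eq hu hv h
    subst hlen
    refine ⟨rfl, hseq, ?_⟩
    have hu' : ReducedWord A B ℓ u iv ev := ReducedWord_congr hseq hu
    have h' : wordProd A B φ ℓ u iv ev = wordProd A B φ ℓ v iv ev := by
      rw [← wordProd_congr A B φ ℓ u iu iv eu ev hseq]
      exact h
    obtain ⟨c, hc0, hfin, htr⟩ := chain_of_eq_of_reduced A B φ ℓ 1 u v iv ev hu' hv
      (by rw [map_one, one_mul]; exact h')
    exact ⟨c, hc0, hfin, htr⟩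
  · rintro ⟨rfl, hseq, c, hc0, hfin, htr⟩
    have hch := wordProd_eq_of_chain A B φ ℓ u v c iv ev hfin htr
    rw [hc0, map_one, one_mul] at hch
    rw [wordProd_congr A B φ ℓ u iu iv eu ev hseq]
    exact hch

variable {A B φ}

theorem transfer_iff_of_agree {ι₂ : Type*} {A' B' : ι₂ → Subgroup H} {φ' : ∀ j, A' j ≃* B' j}
    {i : ι} {j : ι₂} (hA : A i = A' j) (hB : B i = B' j)
    (hφ : ∀ (a : H) (ha : a ∈ A i) (ha' : a ∈ A' j),
      ((φ i ⟨a, ha⟩ : B i) : H) = ((φ' j ⟨a, ha'⟩ : B' j) : H))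
    (e : ℤ) (x c' : H) :
    transfer A B φ i e x c' ↔ transfer A' B' φ' j e x c' := by
  have hsymm : ∀ (b : H) (hb : b ∈ B i) (hb' : b ∈ B' j),
      (((φ i).symm ⟨b, hb⟩ : A i) : H) = (((φ' j).symm ⟨b, hb'⟩ : A' j) : H) := by
    intro b hb hb'
    have ha : (((φ i).symm ⟨b, hb⟩ : A i) : H) ∈ A' j := hA ▸ ((φ i).symm ⟨b, hb⟩).2
    have h1 : ((φ' j ⟨(((φ i).symm ⟨b, hb⟩ : A i) : H), ha⟩ : B' j) : H) = b := by
      rw [← hφ _ ((φ i).symm ⟨b, hb⟩).2 ha, Subtype.coe_eta, MulEquiv.apply_symm_apply]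
    have h2 : (φ' j).symm ⟨b, hb'⟩ = ⟨(((φ i).symm ⟨b, hb⟩ : A i) : H), ha⟩ := by
      rw [MulEquiv.symm_apply_eq]
      apply Subtype.ext
      simpa using h1.symm
    rw [h2]
  constructor
  · rintro (⟨he, hx, rfl⟩ | ⟨he, hx, rfl⟩)
    · exact Or.inl ⟨he, hA ▸ hx, hφ x hx (hA ▸ hx)⟩
    · exact Or.inr ⟨he, hB ▸ hx, hsymm x hx (hB ▸ hx)⟩
  · rintro (⟨he, hx, rfl⟩ | ⟨he, hx, rfl⟩)
    · have hx0 : x ∈ A i := hA ▸ hx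
      exact Or.inl ⟨he, hx0, (hφ x hx0 hx).symm⟩
    · have hx0 : x ∈ B i := hB ▸ hx
      exact Or.inr ⟨he, hx0, (hsymm x hx0 hx).symm⟩

theorem matched_iff_of_agree {ι₂ : Type*} {A' B' : ι₂ → Subgroup H} {φ' : ∀ j, A' j ≃* B' j}
    {m : ℕ} {u v : ℕ → H} {idx : ℕ → ι} {idx' : ℕ → ι₂} {e : ℕ → ℤ}
    (hagree : ∀ k < m, A (idx k) = A' (idx' k) ∧ B (idx k) = B' (idx' k) ∧
      ∀ (a : H) (ha : a ∈ A (idx k)) (ha' : a ∈ A' (idx' k)),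
        ((φ (idx k) ⟨a, ha⟩ : B (idx k)) : H) = ((φ' (idx' k) ⟨a, ha'⟩ : B' (idx' k)) : H)) :
    Matched A B φ m u v idx e ↔ Matched A' B' φ' m u v idx' e := by
  apply exists_congr
  intro c
  apply and_congr_right
  intro _
  apply and_congr_right
  intro _
  apply forall₂_congr
  intro k hk
  exact transfer_iff_of_agree (hagree k hk).1 (hagree k hk).2.1 (hagree k hk).2.2 _ _ _
end MHNN

/-- Let `τ(i) = min {k | φ_k = φ_i}` and let `G′` be the HNN-extension with
stable letters `t_{j,b}` for `j` in the range of `τ` and `b ∈ {0,1}`, where `t_{j,b}` has the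
associated partial isomorphism `φ_j`. Let `T` replace the `r`-th stable letter `t_{i_r}^{α_r}`
of a word by `t_{τ(i_r), r mod 2}^{α_r}`. If `u, v` are reduced words w.r.t. `G`, then `T(u)`
and `T(v)` are reduced w.r.t. `G′`, and `u = v` in `G` iff `T(u) = T(v)` in `G′` and
`π_t(u) = π_t(v)`. -/
theorem transducer_correct {H : Type*} [Group H] {n : ℕ}
    (A B : Fin n → Subgroup H) (φ : ∀ i, A i ≃* B i)
    (τ : Fin n → Fin n)
    (hτ : ∀ i, SamePartialIso A B φ i (τ i) ∧
      ∀ k, SamePartialIso A B φ i k → τ i ≤ k)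
    (ℓ m : ℕ) (u v : ℕ → H) (iu iv : ℕ → Fin n) (eu ev : ℕ → ℤ)
    (hu : ReducedWord A B ℓ u iu eu) (hv : ReducedWord A B m v iv ev) :
    ReducedWord (fun p : {j : Fin n // ∃ i, τ i = j} × Bool => A p.1.1)
        (fun p => B p.1.1) ℓ u
        (fun k => (⟨τ (iu k), iu k, rfl⟩, decide ((k + 1) % 2 = 1))) eu ∧
    ReducedWord (fun p : {j : Fin n // ∃ i, τ i = j} × Bool => A p.1.1)
        (fun p => B p.1.1) m v
        (fun k => (⟨τ (iv k), iv k, rfl⟩, decide ((k + 1) % 2 = 1))) ev ∧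
    (wordProd A B φ ℓ u iu eu = wordProd A B φ m v iv ev ↔
      (wordProd (fun p : {j : Fin n // ∃ i, τ i = j} × Bool => A p.1.1)
          (fun p => B p.1.1) (fun p => φ p.1.1) ℓ u
          (fun k => (⟨τ (iu k), iu k, rfl⟩, decide ((k + 1) % 2 = 1))) eu =
        wordProd (fun p : {j : Fin n // ∃ i, τ i = j} × Bool => A p.1.1)
          (fun p => B p.1.1) (fun p => φ p.1.1) m v
          (fun k => (⟨τ (iv k), iv k, rfl⟩, decide ((k + 1) % 2 = 1))) ev ∧
        ℓ = m ∧ ∀ k < m, iu k = iv k ∧ eu k = ev k)) := by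
  have hred : ∀ (m' : ℕ) (w : ℕ → H) (iw : ℕ → Fin n) (ew : ℕ → ℤ),
      ReducedWord A B m' w iw ew →
      ReducedWord (fun p : {j : Fin n // ∃ i, τ i = j} × Bool => A p.1.1) (fun p => B p.1.1)
        m' w (fun k => (⟨τ (iw k), iw k, rfl⟩, decide ((k + 1) % 2 = 1))) ew := by
    intro m' w iw ew hw
    refine ⟨hw.1, fun k hk h1 h2 => ?_⟩
    exfalso
    have hb : decide ((k + 1) % 2 = 1) = decide ((k + 1 + 1) % 2 = 1) := congrArg Prod.snd h1
    rw [decide_eq_decide] at hb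
    omega
  have hTu := hred ℓ u iu eu hu
  have hTv := hred m v iv ev hv
  refine ⟨hTu, hTv, ?_⟩
  rw [MHNN.wordProd_eq_iff A B φ hu hv,
    MHNN.wordProd_eq_iff (fun p : {j : Fin n // ∃ i, τ i = j} × Bool => A p.1.1)
      (fun p => B p.1.1) (fun p => φ p.1.1) hTu hTv]
  have hM : MHNN.Matched A B φ m u v iv ev ↔
      MHNN.Matched (fun p : {j : Fin n // ∃ i, τ i = j} × Bool => A p.1.1)
        (fun p => B p.1.1) (fun p => φ p.1.1) m u v
        (fun k => (⟨τ (iv k), iv k, rfl⟩, decide ((k + 1) % 2 = 1))) ev :=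
    MHNN.matched_iff_of_agree (fun k _ =>
      ⟨(hτ (iv k)).1.1, (hτ (iv k)).1.2.1, fun a ha ha' => (hτ (iv k)).1.2.2 a ha ha'⟩)
  constructor
  · rintro ⟨rfl, hseq, hMat⟩
    refine ⟨⟨rfl, ?_, hM.1 hMat⟩, rfl, hseq⟩
    intro k hk
    exact ⟨Prod.ext (Subtype.ext (congrArg τ (hseq k hk).1)) rfl, (hseq k hk).2⟩
  · rintro ⟨⟨h1, hseqT, hMat'⟩, rfl, hseq⟩
    exact ⟨rfl, hseq, hM.2 hMat'⟩
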